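/- Let X₀, X₁, Y₀, Y₁, E, F be Banach spaces, let i₀ : X₀ → E, i₁ : X₁ → E, j₀ : Y₀ → F, j₁ : Y₁ → F be bounded linear maps with j₀ injective, let T₀ : X₀ → Y₀ be a compact linear operator and T₁ : X₁ → Y₁ a bounded linear operator, and suppose that j₀(T₀x₀) = j₁(T₁x₁) whenever x₀ ∈ X₀ and x₁ ∈ X₁ satisfy i₀x₀ = i₁x₁. Then there exists a function η : [0,∞) → [0,∞) with lim_{δ→0} η(δ) = η(0) = 0 such that ‖T₀x₀‖_{Y₀} ≤ η(‖x₁‖_{X₁}) whenever x₀ ∈ X₀ and x₁ ∈ X₁ satisfy i₀x₀ = i₁x₁ and ‖x₀‖_{X₀} ≤ 1. Equivalently, for every ε > 0 there exists δ > 0 such that i₀x₀ = i₁x₁, ‖x₀‖_{X₀} ≤ 1 and ‖x₁‖_{X₁} ≤ δ imply ‖T₀x₀‖_{Y₀} ≤ ε. -/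

import Mathlib

open Filter Topology

theorem stmt4 {X₀ X₁ Y₀ Y₁ E F : Type*}
    [NormedAddCommGroup X₀] [NormedSpace ℂ X₀] [CompleteSpace X₀]
    [NormedAddCommGroup X₁] [NormedSpace ℂ X₁] [CompleteSpace X₁]
    [NormedAddCommGroup Y₀] [NormedSpace ℂ Y₀] [CompleteSpace Y₀]
    [NormedAddCommGroup Y₁] [NormedSpace ℂ Y₁] [CompleteSpace Y₁]
    [NormedAddCommGroup E] [NormedSpace ℂ E] [CompleteSpace E]
    [NormedAddCommGroup F] [NormedSpace ℂ F] [CompleteSpace F]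
    (i₀ : X₀ →L[ℂ] E) (i₁ : X₁ →L[ℂ] E) (j₀ : Y₀ →L[ℂ] F) (j₁ : Y₁ →L[ℂ] F)
    (hj₀ : Function.Injective j₀)
    (T₀ : X₀ →L[ℂ] Y₀) (hT₀ : IsCompactOperator T₀) (T₁ : X₁ →L[ℂ] Y₁)
    (hcompat : ∀ (x₀ : X₀) (x₁ : X₁), i₀ x₀ = i₁ x₁ → j₀ (T₀ x₀) = j₁ (T₁ x₁)) :
    ∃ η : ℝ → ℝ, η 0 = 0 ∧ (∀ s : ℝ, 0 ≤ η s) ∧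
      Tendsto η (nhdsWithin 0 (Set.Ici 0)) (𝓝 0) ∧
      ∀ (x₀ : X₀) (x₁ : X₁), i₀ x₀ = i₁ x₁ → ‖x₀‖ ≤ 1 → ‖T₀ x₀‖ ≤ η ‖x₁‖ := by
  -- the key ε-δ claim
  have key : ∀ ε > (0:ℝ), ∃ δ > (0:ℝ), ∀ (x₀ : X₀) (x₁ : X₁),
      i₀ x₀ = i₁ x₁ → ‖x₀‖ ≤ 1 → ‖x₁‖ ≤ δ → ‖T₀ x₀‖ ≤ ε := by
    by_contra h
    push_neg at h
    obtain ⟨ε, hε, h⟩ := h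
    choose u v hcomp hu hv hT using fun n : ℕ => h (1/(n+1)) (by positivity)
    have hK : IsCompact (closure (T₀ '' Metric.closedBall 0 1)) :=
      IsCompactOperator.isCompact_closure_image_closedBall (𝕜₁ := ℂ)
        (f := (T₀ : X₀ →ₗ[ℂ] Y₀)) hT₀ 1
    have hmem : ∀ n, T₀ (u n) ∈ closure (T₀ '' Metric.closedBall 0 1) := fun n =>
      subset_closure ⟨u n, by simpa using hu n, rfl⟩
    obtain ⟨y, hy, φ, hφ, hconv⟩ := hK.tendsto_subseq hmem
    -- T₁ (v n) → 0
    have hv0 : Tendsto (fun n => T₁ (v n)) atTop (𝓝 0) := by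
      apply squeeze_zero_norm (a := fun n : ℕ => ‖T₁‖ * (1/(n+1)))
      · intro n
        calc ‖T₁ (v n)‖ ≤ ‖T₁‖ * ‖v n‖ := T₁.le_opNorm _
          _ ≤ ‖T₁‖ * (1/(n+1)) := by
              refine mul_le_mul_of_nonneg_left (hv n) (norm_nonneg _)
      · simpa using tendsto_one_div_add_atTop_nhds_zero_nat.const_mul ‖T₁‖
    have h1 : Tendsto (fun n => j₀ (T₀ (u (φ n)))) atTop (𝓝 (j₀ y)) :=
      (j₀.continuous.tendsto y).comp hconv
    have h2 : Tendsto (fun n => j₁ (T₁ (v (φ n)))) atTop (𝓝 0) := by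
      have := ((j₁.continuous.tendsto 0).comp hv0).comp hφ.tendsto_atTop
      simpa [Function.comp_def] using this
    have heq : (fun n => j₀ (T₀ (u (φ n)))) = fun n => j₁ (T₁ (v (φ n))) := by
      funext n; exact hcompat _ _ (hcomp (φ n))
    rw [heq] at h1
    have hy0 : j₀ y = 0 := tendsto_nhds_unique h1 h2
    have : y = 0 := hj₀ (by simpa using hy0)
    subst this
    have hn2 : Tendsto (fun n => ‖T₀ (u (φ n))‖) atTop (𝓝 0) := by
      simpa using hconv.norm
    obtain ⟨n, hn⟩ := (hn2.eventually_lt_const hε).exists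
    exact absurd (hT (φ n)) (not_lt.mpr hn.le)
  -- define η as a sup
  set S : ℝ → Set ℝ := fun s => {r | ∃ (x₀ : X₀) (x₁ : X₁),
      i₀ x₀ = i₁ x₁ ∧ ‖x₀‖ ≤ 1 ∧ ‖x₁‖ ≤ s ∧ r = ‖T₀ x₀‖} with hS
  have hbdd : ∀ s, BddAbove (S s) := by
    intro s
    refine ⟨‖T₀‖, ?_⟩
    rintro r ⟨x₀, x₁, -, hx₀, -, rfl⟩
    calc ‖T₀ x₀‖ ≤ ‖T₀‖ * ‖x₀‖ := T₀.le_opNorm _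
      _ ≤ ‖T₀‖ * 1 := mul_le_mul_of_nonneg_left hx₀ (norm_nonneg _)
      _ = ‖T₀‖ := mul_one _
  have hmem0 : ∀ s, 0 ≤ s → (0:ℝ) ∈ S s := by
    intro s hs
    refine ⟨0, 0, by simp, by simp, by simpa, by simp⟩
  refine ⟨fun s => sSup (S s), ?_, ?_, ?_, ?_⟩
  · -- η 0 = 0
    have hsub : S 0 ⊆ {0} := by
      rintro r ⟨x₀, x₁, hc, -, hx₁, rfl⟩
      have hx1 : x₁ = 0 := by
        have : ‖x₁‖ = 0 := le_antisymm hx₁ (norm_nonneg _)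
        simpa using this
      subst hx1
      have h0 : j₀ (T₀ x₀) = 0 := by simpa using hcompat x₀ 0 (by simpa using hc)
      have : T₀ x₀ = 0 := hj₀ (by simpa using h0)
      simp [this]
    have : S 0 = {0} := le_antisymm hsub (by rintro r rfl; exact hmem0 0 le_rfl)
    simp [this]
  · -- nonneg
    intro s
    rcases le_or_gt 0 s with hs | hs
    · exact le_csSup (hbdd s) (hmem0 s hs)
    · have : S s = ∅ := by
        ext r
        simp only [hS, Set.mem_setOf_eq, Set.mem_empty_iff_false, iff_false]
        rintro ⟨x₀, x₁, -, -, hx₁, -⟩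
        exact absurd (le_trans (norm_nonneg x₁) hx₁) (not_le.mpr hs)
      simp [this, Real.sSup_empty]
  · -- tendsto
    rw [Metric.tendsto_nhdsWithin_nhds]
    intro ε hε
    obtain ⟨δ, hδ, hδ'⟩ := key (ε/2) (by positivity)
    refine ⟨δ, hδ, fun s _ hsd => ?_⟩
    have hsup : sSup (S s) ≤ ε/2 := by
      apply Real.sSup_le _ (by positivity)
      rintro r ⟨x₀, x₁, hc, hx₀, hx₁, rfl⟩
      refine hδ' x₀ x₁ hc hx₀ (hx₁.trans ?_)
      calc s ≤ |s| := le_abs_self s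
        _ = dist s 0 := by simp [Real.dist_eq]
        _ ≤ δ := hsd.le
    have hnn : 0 ≤ sSup (S s) := by
      rcases le_or_gt 0 s with hs | hs
      · exact le_csSup (hbdd s) (hmem0 s hs)
      · have : S s = ∅ := by
          ext r
          simp only [hS, Set.mem_setOf_eq, Set.mem_empty_iff_false, iff_false]
          rintro ⟨x₀, x₁, -, -, hx₁, -⟩
          exact absurd (le_trans (norm_nonneg x₁) hx₁) (not_le.mpr hs)
        simp [this, Real.sSup_empty]
    rw [Real.dist_eq]
    rw [abs_of_nonneg (by simpa using hnn)]
    linarith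
  · intro x₀ x₁ hc hx₀
    exact le_csSup (hbdd _) ⟨x₀, x₁, hc, hx₀, le_rfl, rfl⟩
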